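/- Let n ≥ 1 and let K and L be nonempty compact convex subsets of ℝⁿ. If c ∈ ℝ is such that (vol(K + εL) − vol(K))/ε → c as ε → 0⁺, then cⁿ ≥ nⁿ · vol(K)^{n−1} · vol(L). -/

import Mathlib

open MeasureTheory Pointwise

open Set
open scoped ENNReal NNReal

lemma bm1_compact {A B : Set ℝ} (hA : IsCompact A) (hB : IsCompact B)
    (hAne : A.Nonempty) (hBne : B.Nonempty) :
    volume A + volume B ≤ volume (A + B) := by
  set a := sSup A with ha_def
  set b := sInf B with hb_def
  have haA : a ∈ A := hA.sSup_mem hAne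
  have hbB : b ∈ B := hB.sInf_mem hBne
  set S := (fun x => x + b) '' A with hS_def
  set T := (fun y => a + y) '' B with hT_def
  have hSvol : volume S = volume A := by
    have : S = b +ᵥ A := by
      ext z
      constructor
      · rintro ⟨x, hx, rfl⟩; exact ⟨x, hx, by simp [add_comm]⟩
      · rintro ⟨x, hx, rfl⟩; exact ⟨x, hx, by simp [add_comm]⟩
    rw [this, measure_vadd]
  have hTvol : volume T = volume B := by
    have : T = a +ᵥ B := by
      ext z
      constructor
      · rintro ⟨y, hy, rfl⟩; exact ⟨y, hy, rfl⟩
      · rintro ⟨y, hy, rfl⟩; exact ⟨y, hy, rfl⟩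
    rw [this, measure_vadd]
  have hTmeas : MeasurableSet T := (hB.image (continuous_add_left a)).measurableSet
  have hUnion : S ∪ T ⊆ A + B := by
    rintro z (⟨x, hx, rfl⟩ | ⟨y, hy, rfl⟩)
    · exact Set.add_mem_add hx hbB
    · exact Set.add_mem_add haA hy
  have hInter : S ∩ T ⊆ {a + b} := by
    rintro z ⟨⟨x, hx, rfl⟩, ⟨y, hy, hz⟩⟩
    have h1 : x ≤ a := le_csSup hA.bddAbove hx
    have h2 : b ≤ y := csInf_le hB.bddBelow hy
    have : x + b ≤ a + b := by linarith
    have hz' : a + y = x + b := hz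
    simp only [Set.mem_singleton_iff]
    have hxa : x = a := by linarith
    linarith
  calc volume A + volume B = volume S + volume T := by rw [hSvol, hTvol]
    _ = volume (S ∪ T) + volume (S ∩ T) := (measure_union_add_inter S hTmeas).symm
    _ ≤ volume (A + B) + volume {a + b} :=
        add_le_add (measure_mono hUnion) (measure_mono hInter)
    _ = volume (A + B) := by rw [Real.volume_singleton, add_zero]

lemma bm1 {A B : Set ℝ} (hA : MeasurableSet A) (hB : MeasurableSet B)
    (hAne : A.Nonempty) (hBne : B.Nonempty) {C : Set ℝ} (hC : A + B ⊆ C) :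
    volume A + volume B ≤ volume C := by
  obtain ⟨a, haA⟩ := hAne
  obtain ⟨b, hbB⟩ := hBne
  have htrA : volume A ≤ volume C := by
    calc volume A = volume (b +ᵥ A) := (measure_vadd _ _ _).symm
      _ ≤ volume C := by
          refine measure_mono fun z hz => ?_
          obtain ⟨x, hx, rfl⟩ := hz
          exact hC (by simpa [add_comm] using Set.add_mem_add hx hbB)
  have htrB : volume B ≤ volume C := by
    calc volume B = volume (a +ᵥ B) := (measure_vadd _ _ _).symm
      _ ≤ volume C := by
          refine measure_mono fun z hz => ?_
          obtain ⟨y, hy, rfl⟩ := hz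
          exact hC (Set.add_mem_add haA hy)
  rcases eq_top_or_lt_top (volume A) with hAtop | hAfin
  · have : volume C = ⊤ := top_le_iff.mp (hAtop ▸ htrA)
    simp [this]
  rcases eq_top_or_lt_top (volume B) with hBtop | hBfin
  · have : volume C = ⊤ := top_le_iff.mp (hBtop ▸ htrB)
    simp [this]
  refine ENNReal.le_of_forall_pos_le_add fun ε hε hCfin => ?_
  have hεne : (ε : ℝ≥0∞) ≠ 0 := by exact_mod_cast hε.ne'
  have hε2 : (ε : ℝ≥0∞) / 2 ≠ 0 := by
    simp [ENNReal.div_eq_zero_iff, hεne]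
  obtain ⟨K₁, hK₁A, hK₁c, hK₁v⟩ := hA.exists_isCompact_lt_add hAfin.ne hε2
  obtain ⟨K₂, hK₂B, hK₂c, hK₂v⟩ := hB.exists_isCompact_lt_add hBfin.ne hε2
  set K₁' := insert a K₁ with hK₁'_def
  set K₂' := insert b K₂ with hK₂'_def
  have hK₁'c : IsCompact K₁' := hK₁c.insert a
  have hK₂'c : IsCompact K₂' := hK₂c.insert b
  have hK₁'A : K₁' ⊆ A := Set.insert_subset haA hK₁A
  have hK₂'B : K₂' ⊆ B := Set.insert_subset hbB hK₂B
  have hbm := bm1_compact hK₁'c hK₂'c ⟨a, Set.mem_insert a K₁⟩ ⟨b, Set.mem_insert b K₂⟩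
  have hsum : K₁' + K₂' ⊆ C := fun z hz => by
    obtain ⟨x, hx, y, hy, rfl⟩ := hz
    exact hC (Set.add_mem_add (hK₁'A hx) (hK₂'B hy))
  have h1 : volume A ≤ volume K₁' + ε/2 :=
    le_trans hK₁v.le (add_le_add_left (measure_mono (Set.subset_insert a K₁)) _)
  have h2 : volume B ≤ volume K₂' + ε/2 :=
    le_trans hK₂v.le (add_le_add_left (measure_mono (Set.subset_insert b K₂)) _)
  calc volume A + volume B ≤ (volume K₁' + ε/2) + (volume K₂' + ε/2) := add_le_add h1 h2
    _ = (volume K₁' + volume K₂') + (ε/2 + ε/2) := by ring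
    _ ≤ volume C + ε := by
        rw [ENNReal.add_halves]
        exact add_le_add_left (le_trans hbm (measure_mono hsum)) _

lemma layercake_ennreal {f : ℝ → ℝ≥0∞} (hf : Measurable f) (hfin : ∀ x, f x ≠ ∞) :
    ∫⁻ x, f x = ∫⁻ u in Ioi (0:ℝ), volume {x | ENNReal.ofReal u < f x} := by
  have h0 : ∀ x, f x = ENNReal.ofReal ((f x).toReal) := fun x =>
    (ENNReal.ofReal_toReal (hfin x)).symm
  calc ∫⁻ x, f x = ∫⁻ x, ENNReal.ofReal ((f x).toReal) := by
        congr 1; funext x; exact h0 x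
    _ = ∫⁻ u in Ioi (0:ℝ), volume {x | u < (f x).toReal} :=
        lintegral_eq_lintegral_meas_lt volume (ae_of_all _ fun x => ENNReal.toReal_nonneg)
          hf.ennreal_toReal.aemeasurable
    _ = ∫⁻ u in Ioi (0:ℝ), volume {x | ENNReal.ofReal u < f x} := by
        refine setLIntegral_congr_fun measurableSet_Ioi (fun u hu => ?_)
        congr 1
        ext x
        simp only [Set.mem_setOf_eq]
        rw [ENNReal.ofReal_lt_iff_lt_toReal (le_of_lt hu) (hfin x)]

lemma lintegral_Ioi_comp_mul {F : ℝ → ℝ≥0∞} (hF : Measurable F) {c : ℝ} (hc : 0 < c) :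
    ∫⁻ u in Ioi (0:ℝ), F (c * u) = ENNReal.ofReal c⁻¹ * ∫⁻ u in Ioi (0:ℝ), F u := by
  set G := (Ioi (0:ℝ)).indicator F with hG_def
  have hGm : Measurable G := hF.indicator measurableSet_Ioi
  have h1 : ∫⁻ u in Ioi (0:ℝ), F (c * u) = ∫⁻ u, G (c * u) := by
    rw [← lintegral_indicator measurableSet_Ioi]
    congr 1; funext u
    by_cases hu : u ∈ Ioi (0:ℝ)
    · rw [Set.indicator_of_mem hu, hG_def,
        Set.indicator_of_mem (by exact mul_pos hc hu : c * u ∈ Ioi (0:ℝ))]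
    · rw [Set.indicator_of_notMem hu, hG_def, Set.indicator_of_notMem]
      simp only [Set.mem_Ioi, not_lt] at hu ⊢
      exact mul_nonpos_of_nonneg_of_nonpos hc.le hu
  have h2 : ∫⁻ u, G (c * u) = ∫⁻ y, G y ∂(Measure.map (fun x => c * x) volume) :=
    (lintegral_map hGm (measurable_const_mul c)).symm
  rw [h1, h2, Real.map_volume_mul_left hc.ne', lintegral_smul_measure, smul_eq_mul,
    abs_of_pos (inv_pos.mpr hc), ← lintegral_indicator measurableSet_Ioi]

lemma weight_prod_one {t a b : ℝ} (ht0 : 0 < t) (ht1 : t < 1) (ha : 0 < a) (hb : 0 < b) :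
    (a / (a ^ (1-t) * b ^ t)) ^ (1-t) * (b / (a ^ (1-t) * b ^ t)) ^ t = 1 := by
  set m := a ^ (1-t) * b ^ t with hm
  have hm0 : 0 < m := mul_pos (Real.rpow_pos_of_pos ha _) (Real.rpow_pos_of_pos hb _)
  rw [Real.div_rpow ha.le hm0.le, Real.div_rpow hb.le hm0.le, div_mul_div_comm, ← hm,
    ← Real.rpow_add hm0]
  simp [hm0.ne']

lemma pl_dim1_bounded {t : ℝ} (ht0 : 0 < t) (ht1 : t < 1)
    {f g h : ℝ → ℝ≥0∞} (hf : Measurable f) (hg : Measurable g) (hh : Measurable h)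
    (hle : ∀ x y, f x ^ (1 - t) * g y ^ t ≤ h ((1-t) * x + t * y))
    (hSf0 : (⨆ x, f x) ≠ 0) (hSftop : (⨆ x, f x) ≠ ∞)
    (hSg0 : (⨆ x, g x) ≠ 0) (hSgtop : (⨆ x, g x) ≠ ∞) :
    (∫⁻ x, f x) ^ (1-t) * (∫⁻ x, g x) ^ t ≤ ∫⁻ x, h x := by
  have ht1' : 0 < 1 - t := by linarith
  set a := (⨆ x, f x).toReal with ha_def
  set b := (⨆ x, g x).toReal with hb_def
  have ha : 0 < a := ENNReal.toReal_pos hSf0 hSftop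
  have hb : 0 < b := ENNReal.toReal_pos hSg0 hSgtop
  set m := a ^ (1-t) * b ^ t with hm_def
  have hm : 0 < m := mul_pos (Real.rpow_pos_of_pos ha _) (Real.rpow_pos_of_pos hb _)
  have hfa : ∀ x, f x ≤ ENNReal.ofReal a := fun x => by
    rw [ha_def, ENNReal.ofReal_toReal hSftop]; exact le_iSup f x
  have hgb : ∀ x, g x ≤ ENNReal.ofReal b := fun x => by
    rw [hb_def, ENNReal.ofReal_toReal hSgtop]; exact le_iSup g x
  have hffin : ∀ x, f x ≠ ∞ := fun x => ((hfa x).trans_lt ENNReal.ofReal_lt_top).ne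
  have hgfin : ∀ x, g x ≠ ∞ := fun x => ((hgb x).trans_lt ENNReal.ofReal_lt_top).ne
  set h' := fun x => min (h x) (ENNReal.ofReal m) with hh'_def
  have hh'm : Measurable h' := hh.min measurable_const
  have hh'fin : ∀ x, h' x ≠ ∞ :=
    fun x => ((min_le_right _ _).trans_lt ENNReal.ofReal_lt_top).ne
  set Φf := fun v : ℝ => volume {x | ENNReal.ofReal v < f x} with hΦf_def
  set Φg := fun v : ℝ => volume {x | ENNReal.ofReal v < g x} with hΦg_def
  have hΦfA : Antitone Φf := fun v w hvw =>
    measure_mono fun x hx => lt_of_le_of_lt (ENNReal.ofReal_le_ofReal hvw) hx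
  have hΦgA : Antitone Φg := fun v w hvw =>
    measure_mono fun x hx => lt_of_le_of_lt (ENNReal.ofReal_le_ofReal hvw) hx
  have hcf : 0 < a / m := div_pos ha hm
  have hcg : 0 < b / m := div_pos hb hm
  -- pointwise key inequality
  have hkey : ∀ u ∈ Ioi (0:ℝ),
      ENNReal.ofReal (1-t) * Φf (a/m * u) + ENNReal.ofReal t * Φg (b/m * u)
        ≤ volume {x | ENNReal.ofReal u < h' x} := by
    intro u hu
    simp only [Set.mem_Ioi] at hu
    by_cases hum : u < m
    · set A := {x | ENNReal.ofReal (a/m * u) < f x} with hA_def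
      set B := {x | ENNReal.ofReal (b/m * u) < g x} with hB_def
      have hAmeas : MeasurableSet A := measurableSet_lt measurable_const hf
      have hBmeas : MeasurableSet B := measurableSet_lt measurable_const hg
      have hAne : A.Nonempty := by
        have h1 : ENNReal.ofReal (a/m * u) < ⨆ x, f x := by
          rw [← ENNReal.ofReal_toReal hSftop, ← ha_def]
          refine ENNReal.ofReal_lt_ofReal_iff ha |>.mpr ?_
          calc a/m * u < a/m * m := by
                exact mul_lt_mul_of_pos_left hum hcf
            _ = a := div_mul_cancel₀ a hm.ne'
        obtain ⟨x₀, hx₀⟩ := lt_iSup_iff.mp h1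
        exact ⟨x₀, hx₀⟩
      have hBne : B.Nonempty := by
        have h1 : ENNReal.ofReal (b/m * u) < ⨆ x, g x := by
          rw [← ENNReal.ofReal_toReal hSgtop, ← hb_def]
          refine ENNReal.ofReal_lt_ofReal_iff hb |>.mpr ?_
          calc b/m * u < b/m * m := mul_lt_mul_of_pos_left hum hcg
            _ = b := div_mul_cancel₀ b hm.ne'
        obtain ⟨y₀, hy₀⟩ := lt_iSup_iff.mp h1
        exact ⟨y₀, hy₀⟩
      have hsub : ((1-t) • A) + (t • B) ⊆ {x | ENNReal.ofReal u < h' x} := by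
        rintro z ⟨p, ⟨x, hx, rfl⟩, q, ⟨y, hy, rfl⟩, rfl⟩
        simp only [smul_eq_mul, Set.mem_setOf_eq]
        have hval : ENNReal.ofReal u < h ((1-t) * x + t * y) := by
          have hprod : (ENNReal.ofReal (a/m*u)) ^ (1-t) * (ENNReal.ofReal (b/m*u)) ^ t
              = ENNReal.ofReal u := by
            rw [ENNReal.ofReal_rpow_of_nonneg (by positivity) ht1'.le,
              ENNReal.ofReal_rpow_of_nonneg (by positivity) ht0.le,
              ← ENNReal.ofReal_mul (by positivity)]
            congr 1
            rw [Real.mul_rpow (le_of_lt hcf) hu.le, Real.mul_rpow (le_of_lt hcg) hu.le]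
            calc (a/m)^(1-t) * u^(1-t) * ((b/m)^t * u^t)
                = ((a/m)^(1-t) * (b/m)^t) * (u^(1-t) * u^t) := by ring
              _ = 1 * u := by
                  have hw : (a/m)^(1-t) * (b/m)^t = 1 := by
                    rw [hm_def]; exact weight_prod_one ht0 ht1 ha hb
                  rw [hw, ← Real.rpow_add hu]; norm_num
              _ = u := one_mul u
          calc ENNReal.ofReal u
              = (ENNReal.ofReal (a/m*u)) ^ (1-t) * (ENNReal.ofReal (b/m*u)) ^ t := hprod.symm
            _ < f x ^ (1-t) * g y ^ t :=
                ENNReal.mul_lt_mul (ENNReal.rpow_lt_rpow hx ht1') (ENNReal.rpow_lt_rpow hy ht0)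
            _ ≤ h ((1-t) * x + t * y) := hle x y
        exact lt_min hval (by
          exact (ENNReal.ofReal_lt_ofReal_iff hm).mpr hum)
      have hbm := bm1 (hAmeas.const_smul₀ (1-t)) (hBmeas.const_smul₀ t)
        (smul_set_nonempty.mpr hAne) (smul_set_nonempty.mpr hBne) hsub
      have hvA : volume ((1-t) • A) = ENNReal.ofReal (1-t) * volume A := by
        rw [Measure.addHaar_smul]
        congr 2
        simp [abs_of_pos ht1']
      have hvB : volume (t • B) = ENNReal.ofReal t * volume B := by
        rw [Measure.addHaar_smul]
        congr 2
        simp [abs_of_pos ht0]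
      calc ENNReal.ofReal (1-t) * Φf (a/m * u) + ENNReal.ofReal t * Φg (b/m * u)
          = volume ((1-t) • A) + volume (t • B) := by rw [hvA, hvB]
        _ ≤ volume {x | ENNReal.ofReal u < h' x} := hbm
    · push_neg at hum
      have hΦf0 : Φf (a/m * u) = 0 := by
        have : {x | ENNReal.ofReal (a/m * u) < f x} = ∅ := by
          ext x
          simp only [Set.mem_setOf_eq, Set.mem_empty_iff_false, iff_false, not_lt]
          refine (hfa x).trans (ENNReal.ofReal_le_ofReal ?_)
          calc a = a/m * m := (div_mul_cancel₀ a hm.ne').symm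
            _ ≤ a/m * u := mul_le_mul_of_nonneg_left hum hcf.le
        rw [hΦf_def]; simp only [this, measure_empty]
      have hΦg0 : Φg (b/m * u) = 0 := by
        have : {x | ENNReal.ofReal (b/m * u) < g x} = ∅ := by
          ext x
          simp only [Set.mem_setOf_eq, Set.mem_empty_iff_false, iff_false, not_lt]
          refine (hgb x).trans (ENNReal.ofReal_le_ofReal ?_)
          calc b = b/m * m := (div_mul_cancel₀ b hm.ne').symm
            _ ≤ b/m * u := mul_le_mul_of_nonneg_left hum hcg.le
        rw [hΦg_def]; simp only [this, measure_empty]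
      simp [hΦf0, hΦg0]
  -- main chain (key part)
  have hΦfm : Measurable fun u => Φf (a/m * u) :=
    Antitone.measurable (fun v w hvw => hΦfA (by nlinarith))
  have hΦgm : Measurable fun u => Φg (b/m * u) :=
    Antitone.measurable (fun v w hvw => hΦgA (by nlinarith))
  have hΦhm : Measurable fun u : ℝ => volume {x | ENNReal.ofReal u < h' x} :=
    Antitone.measurable (fun v w hvw =>
      measure_mono fun x hx => lt_of_le_of_lt (ENNReal.ofReal_le_ofReal hvw) hx)
  have hkey2 : ENNReal.ofReal (1-t) * (ENNReal.ofReal (m/a) * ∫⁻ x, f x)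
      + ENNReal.ofReal t * (ENNReal.ofReal (m/b) * ∫⁻ x, g x) ≤ ∫⁻ x, h x := by
    have hf_eq : ENNReal.ofReal (m/a) * ∫⁻ x, f x = ∫⁻ u in Ioi (0:ℝ), Φf (a/m * u) := by
      rw [layercake_ennreal hf hffin, ← hΦf_def,
        lintegral_Ioi_comp_mul (Antitone.measurable hΦfA) hcf, inv_div]
    have hg_eq : ENNReal.ofReal (m/b) * ∫⁻ x, g x = ∫⁻ u in Ioi (0:ℝ), Φg (b/m * u) := by
      rw [layercake_ennreal hg hgfin, ← hΦg_def,
        lintegral_Ioi_comp_mul (Antitone.measurable hΦgA) hcg, inv_div]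
    rw [hf_eq, hg_eq, ← lintegral_const_mul _ hΦfm, ← lintegral_const_mul _ hΦgm,
      ← lintegral_add_left (hΦfm.const_mul _)]
    calc ∫⁻ u in Ioi (0:ℝ), (ENNReal.ofReal (1-t) * Φf (a/m*u) + ENNReal.ofReal t * Φg (b/m*u))
        ≤ ∫⁻ u in Ioi (0:ℝ), volume {x | ENNReal.ofReal u < h' x} :=
          setLIntegral_mono hΦhm hkey
      _ = ∫⁻ x, h' x := (layercake_ennreal hh'm hh'fin).symm
      _ ≤ ∫⁻ x, h x := lintegral_mono fun x => min_le_left _ _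
  refine le_trans ?_ hkey2
  -- weighted AM-GM
  set P := ∫⁻ x, f x with hP_def
  set Q := ∫⁻ x, g x with hQ_def
  rcases eq_or_ne P 0 with hP0 | hP0
  · rw [hP0, ENNReal.zero_rpow_of_pos ht1', zero_mul]; exact zero_le
  rcases eq_or_ne Q 0 with hQ0 | hQ0
  · rw [hQ0, ENNReal.zero_rpow_of_pos ht0, mul_zero]; exact zero_le
  rcases eq_or_ne P ∞ with hPtop | hPtop
  · have h1 : ENNReal.ofReal (1-t) * (ENNReal.ofReal (m/a) * P) = ∞ := by
      rw [hPtop, ENNReal.mul_top (by simp only [ne_eq, ENNReal.ofReal_eq_zero, not_le]; positivity),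
        ENNReal.mul_top (by simp only [ne_eq, ENNReal.ofReal_eq_zero, not_le]; linarith)]
    rw [h1, top_add]; exact le_top
  rcases eq_or_ne Q ∞ with hQtop | hQtop
  · have h1 : ENNReal.ofReal t * (ENNReal.ofReal (m/b) * Q) = ∞ := by
      rw [hQtop, ENNReal.mul_top (by simp only [ne_eq, ENNReal.ofReal_eq_zero, not_le]; positivity),
        ENNReal.mul_top (by simp only [ne_eq, ENNReal.ofReal_eq_zero, not_le]; linarith)]
    rw [h1, add_top]; exact le_top
  have hPr : 0 < P.toReal := ENNReal.toReal_pos hP0 hPtop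
  have hQr : 0 < Q.toReal := ENNReal.toReal_pos hQ0 hQtop
  have hPo : P = ENNReal.ofReal P.toReal := (ENNReal.ofReal_toReal hPtop).symm
  have hQo : Q = ENNReal.ofReal Q.toReal := (ENNReal.ofReal_toReal hQtop).symm
  rw [hPo, hQo, ENNReal.ofReal_rpow_of_nonneg ENNReal.toReal_nonneg ht1'.le,
    ENNReal.ofReal_rpow_of_nonneg ENNReal.toReal_nonneg ht0.le,
    ← ENNReal.ofReal_mul (by positivity), ← ENNReal.ofReal_mul (by positivity),
    ← ENNReal.ofReal_mul (by positivity), ← ENNReal.ofReal_mul (by positivity),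
    ← ENNReal.ofReal_mul (by positivity), ← ENNReal.ofReal_add (by positivity) (by positivity)]
  refine ENNReal.ofReal_le_ofReal ?_
  have hwpo : (m/a) ^ (1-t) * (m/b) ^ t = 1 := by
    have h1 := weight_prod_one ht0 ht1 ha hb
    rw [← hm_def] at h1
    have h2 : (m/a) = (a/m)⁻¹ := by rw [inv_div]
    have h3 : (m/b) = (b/m)⁻¹ := by rw [inv_div]
    rw [h2, h3, Real.inv_rpow (by positivity) _, Real.inv_rpow (by positivity) _,
      ← mul_inv, h1, inv_one]
  calc P.toReal ^ (1-t) * Q.toReal ^ t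
      = ((m/a) * P.toReal) ^ (1-t) * ((m/b) * Q.toReal) ^ t := by
        rw [Real.mul_rpow (by positivity) (by positivity),
          Real.mul_rpow (by positivity) (by positivity)]
        have hrng : (m/a)^(1-t) * P.toReal^(1-t) * ((m/b)^t * Q.toReal^t)
            = ((m/a)^(1-t) * (m/b)^t) * (P.toReal^(1-t) * Q.toReal^t) := by ring
        rw [hrng, hwpo, one_mul]
    _ ≤ (1-t) * ((m/a) * P.toReal) + t * ((m/b) * Q.toReal) :=
        Real.geom_mean_le_arith_mean2_weighted ht1'.le ht0.le (by positivity) (by positivity)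
          (by ring)

def PLProp (E : Type*) [MeasurableSpace E] [AddCommMonoid E] [SMul ℝ E] (μ : Measure E) : Prop :=
  ∀ t : ℝ, 0 < t → t < 1 → ∀ f g h : E → ℝ≥0∞, Measurable f → Measurable g → Measurable h →
    (∀ x y, f x ^ (1 - t) * g y ^ t ≤ h ((1-t) • x + t • y)) →
    (∫⁻ x, f x ∂μ) ^ (1-t) * (∫⁻ x, g x ∂μ) ^ t ≤ ∫⁻ x, h x ∂μ

lemma plprop_real : PLProp ℝ volume := by
  intro t ht0 ht1 f g h hf hg hh hle
  have ht1' : 0 < 1 - t := by linarith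
  rcases eq_or_ne (∫⁻ x, f x) 0 with hP0 | hP0
  · rw [hP0, ENNReal.zero_rpow_of_pos ht1', zero_mul]; exact zero_le
  rcases eq_or_ne (∫⁻ x, g x) 0 with hQ0 | hQ0
  · rw [hQ0, ENNReal.zero_rpow_of_pos ht0, mul_zero]; exact zero_le
  have hfx : ∃ x, f x ≠ 0 := by
    by_contra hcon; push_neg at hcon
    exact hP0 (by rw [funext hcon]; exact lintegral_zero)
  have hgy : ∃ y, g y ≠ 0 := by
    by_contra hcon; push_neg at hcon
    exact hQ0 (by rw [funext hcon]; exact lintegral_zero)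
  obtain ⟨x₀, hx₀⟩ := hfx
  obtain ⟨y₀, hy₀⟩ := hgy
  set fm := fun (k : ℕ) (x : ℝ) => min (f x) ((k:ℝ≥0∞) + 1) with hfm_def
  set gm := fun (k : ℕ) (y : ℝ) => min (g y) ((k:ℝ≥0∞) + 1) with hgm_def
  have hfmm : ∀ k, Measurable (fm k) := fun k => hf.min measurable_const
  have hgmm : ∀ k, Measurable (gm k) := fun k => hg.min measurable_const
  have hfmmono : Monotone fm := fun j k hjk x => min_le_min le_rfl (by
    have hc : (j:ℝ≥0∞) ≤ k := by exact_mod_cast hjk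
    exact add_le_add hc le_rfl)
  have hgmmono : Monotone gm := fun j k hjk y => min_le_min le_rfl (by
    have hc : (j:ℝ≥0∞) ≤ k := by exact_mod_cast hjk
    exact add_le_add hc le_rfl)
  have hstep : ∀ k : ℕ, (∫⁻ x, fm k x) ^ (1-t) * (∫⁻ y, gm k y) ^ t ≤ ∫⁻ x, h x := by
    intro k
    have hk1 : ((k:ℝ≥0∞) + 1) ≠ ∞ := by simp
    have hk0 : (0:ℝ≥0∞) < (k:ℝ≥0∞) + 1 := lt_of_lt_of_le zero_lt_one le_add_self
    refine pl_dim1_bounded ht0 ht1 (hfmm k) (hgmm k) hh ?_ ?_ ?_ ?_ ?_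
    · intro x y
      calc fm k x ^ (1-t) * gm k y ^ t ≤ f x ^ (1-t) * g y ^ t := by
            gcongr <;> exact min_le_left _ _
        _ ≤ h ((1-t) * x + t * y) := by
            have := hle x y
            simpa [smul_eq_mul] using this
    · have : 0 < fm k x₀ := lt_min (pos_iff_ne_zero.mpr hx₀) hk0
      exact (lt_of_lt_of_le this (le_iSup (fm k) x₀)).ne'
    · exact ne_top_of_le_ne_top hk1 (iSup_le fun x => min_le_right _ _)
    · have : 0 < gm k y₀ := lt_min (pos_iff_ne_zero.mpr hy₀) hk0
      exact (lt_of_lt_of_le this (le_iSup (gm k) y₀)).ne'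
    · exact ne_top_of_le_ne_top hk1 (iSup_le fun y => min_le_right _ _)
  have hsupf : ∀ x, (⨆ k : ℕ, fm k x) = f x := by
    intro x
    rw [hfm_def]
    simp only
    rw [show (fun k : ℕ => min (f x) ((k:ℝ≥0∞)+1)) = fun k : ℕ => f x ⊓ ((k:ℝ≥0∞)+1) from rfl]
    rw [← inf_iSup_eq]
    have : (⨆ k : ℕ, ((k:ℝ≥0∞) + 1)) = ⊤ := by
      rw [eq_top_iff, ← ENNReal.iSup_natCast]
      exact iSup_mono fun k => le_self_add
    rw [this, inf_top_eq]
  have hsupg : ∀ y, (⨆ k : ℕ, gm k y) = g y := by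
    intro y
    rw [hgm_def]
    simp only
    rw [show (fun k : ℕ => min (g y) ((k:ℝ≥0∞)+1)) = fun k : ℕ => g y ⊓ ((k:ℝ≥0∞)+1) from rfl]
    rw [← inf_iSup_eq]
    have : (⨆ k : ℕ, ((k:ℝ≥0∞) + 1)) = ⊤ := by
      rw [eq_top_iff, ← ENNReal.iSup_natCast]
      exact iSup_mono fun k => le_self_add
    rw [this, inf_top_eq]
  have hPf : Filter.Tendsto (fun k => ∫⁻ x, fm k x) Filter.atTop (nhds (∫⁻ x, f x)) := by
    have hmono : Monotone fun k => ∫⁻ x, fm k x := fun j k hjk =>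
      lintegral_mono (hfmmono hjk)
    have := tendsto_atTop_iSup hmono
    rwa [← lintegral_iSup hfmm hfmmono, show (∫⁻ x, ⨆ k, fm k x) = ∫⁻ x, f x from by
      congr 1; funext x; exact hsupf x] at this
  have hQg : Filter.Tendsto (fun k => ∫⁻ y, gm k y) Filter.atTop (nhds (∫⁻ y, g y)) := by
    have hmono : Monotone fun k => ∫⁻ y, gm k y := fun j k hjk =>
      lintegral_mono (hgmmono hjk)
    have := tendsto_atTop_iSup hmono
    rwa [← lintegral_iSup hgmm hgmmono, show (∫⁻ y, ⨆ k, gm k y) = ∫⁻ y, g y from by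
      congr 1; funext y; exact hsupg y] at this
  have hrpf : Filter.Tendsto (fun k => (∫⁻ x, fm k x) ^ (1-t)) Filter.atTop
      (nhds ((∫⁻ x, f x) ^ (1-t))) := (ENNReal.continuous_rpow_const.tendsto _).comp hPf
  have hrpg : Filter.Tendsto (fun k => (∫⁻ y, gm k y) ^ t) Filter.atTop
      (nhds ((∫⁻ y, g y) ^ t)) := (ENNReal.continuous_rpow_const.tendsto _).comp hQg
  have hne1 : (∫⁻ x, f x) ^ (1-t) ≠ 0 := by
    rw [ne_eq, ENNReal.rpow_eq_zero_iff]
    push_neg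
    exact ⟨fun hc => absurd hc hP0, fun hc => by linarith⟩
  have hne2 : (∫⁻ y, g y) ^ t ≠ 0 := by
    rw [ne_eq, ENNReal.rpow_eq_zero_iff]
    push_neg
    exact ⟨fun hc => absurd hc hQ0, fun hc => by linarith⟩
  have hmul := ENNReal.Tendsto.mul hrpf (Or.inl hne1) hrpg (Or.inl hne2)
  exact le_of_tendsto hmul (Filter.Eventually.of_forall hstep)

lemma PLProp.transfer {E F : Type*} [MeasurableSpace E] [AddCommMonoid E] [SMul ℝ E]
    [MeasurableSpace F] [AddCommMonoid F] [SMul ℝ F]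
    {μ : Measure E} {ν : Measure F} (e : E ≃ᵐ F) (he : MeasurePreserving e μ ν)
    (hlin : ∀ (c d : ℝ) (x y : E), e (c • x + d • y) = c • e x + d • e y)
    (hE : PLProp E μ) : PLProp F ν := by
  intro t ht0 ht1 f g h hf hg hh hle
  rw [← he.lintegral_comp hf, ← he.lintegral_comp hg, ← he.lintegral_comp hh]
  refine hE t ht0 ht1 (fun x => f (e x)) (fun x => g (e x)) (fun x => h (e x))
    (hf.comp e.measurable) (hg.comp e.measurable) (hh.comp e.measurable) ?_
  intro x y
  show f (e x) ^ (1-t) * g (e y) ^ t ≤ h (e ((1-t) • x + t • y))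
  rw [hlin]
  exact hle (e x) (e y)

lemma PLProp.prod {α β : Type*} [MeasurableSpace α] [AddCommMonoid α] [SMul ℝ α]
    [MeasurableSpace β] [AddCommMonoid β] [SMul ℝ β]
    {μ : Measure α} {ν : Measure β} [SigmaFinite μ] [SigmaFinite ν]
    (hα : PLProp α μ) (hβ : PLProp β ν) : PLProp (α × β) (μ.prod ν) := by
  intro t ht0 ht1 f g h hf hg hh hle
  set F := fun x₁ => ∫⁻ x₂, f (x₁, x₂) ∂ν with hF_def
  set G := fun y₁ => ∫⁻ y₂, g (y₁, y₂) ∂ν with hG_def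
  set H := fun z₁ => ∫⁻ z₂, h (z₁, z₂) ∂ν with hH_def
  have hFm : Measurable F := hf.lintegral_prod_right'
  have hGm : Measurable G := hg.lintegral_prod_right'
  have hHm : Measurable H := hh.lintegral_prod_right'
  have key : ∀ x₁ y₁, F x₁ ^ (1-t) * G y₁ ^ t ≤ H ((1-t) • x₁ + t • y₁) := by
    intro x₁ y₁
    refine hβ t ht0 ht1 (fun x₂ => f (x₁, x₂)) (fun y₂ => g (y₁, y₂))
      (fun z₂ => h ((1-t) • x₁ + t • y₁, z₂))
      (hf.comp measurable_prodMk_left) (hg.comp measurable_prodMk_left)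
      (hh.comp measurable_prodMk_left) ?_
    intro x₂ y₂
    exact hle (x₁, x₂) (y₁, y₂)
  rw [lintegral_prod f hf.aemeasurable, lintegral_prod g hg.aemeasurable,
    lintegral_prod h hh.aemeasurable]
  exact hα t ht0 ht1 F G H hFm hGm hHm key

lemma plprop_pi : ∀ n : ℕ, PLProp (Fin n → ℝ) volume := by
  intro n
  induction n with
  | zero =>
    intro t ht0 ht1 f g h hf hg hh hle
    have hμ : (volume : Measure (Fin 0 → ℝ)) Set.univ = 1 := by simp [volume_pi]
    set z : Fin 0 → ℝ := fun i => i.elim0 with hz_def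
    have hpt : ∀ (x : Fin 0 → ℝ), x = z := fun x => funext fun i => i.elim0
    have hconst : ∀ (F : (Fin 0 → ℝ) → ℝ≥0∞), ∫⁻ x, F x = F z := by
      intro F
      rw [show F = fun _ => F z from funext fun x => by rw [hpt x]]
      rw [lintegral_const, hμ, mul_one]
    rw [hconst f, hconst g, hconst h]
    have := hle z z
    rwa [hpt ((1-t) • z + t • z)] at this
  | succ n ih =>
    set e : (Fin (n+1) → ℝ) ≃ᵐ ℝ × (Fin n → ℝ) :=
      MeasurableEquiv.piFinSuccAbove (fun _ => ℝ) 0 with he_def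
    have he : MeasurePreserving e volume volume := by
      have := measurePreserving_piFinSuccAbove (fun _ : Fin (n+1) => (volume : Measure ℝ)) 0
      rw [Measure.volume_eq_prod, volume_pi, volume_pi]
      exact this
    have hlin : ∀ (c d : ℝ) (x y : Fin (n+1) → ℝ),
        e (c • x + d • y) = c • e x + d • e y := by
      intro c d x y
      rfl
    have hlin_symm : ∀ (c d : ℝ) (p q : ℝ × (Fin n → ℝ)),
        e.symm (c • p + d • q) = c • e.symm p + d • e.symm q := by
      intro c d p q
      apply e.injective
      rw [e.apply_symm_apply, hlin, e.apply_symm_apply, e.apply_symm_apply]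
    exact PLProp.transfer e.symm he.symm hlin_symm (PLProp.prod plprop_real ih)

lemma plprop_euclidean (n : ℕ) : PLProp (EuclideanSpace ℝ (Fin n)) volume := by
  refine PLProp.transfer (MeasurableEquiv.toLp 2 (Fin n → ℝ))
    (EuclideanSpace.volume_preserving_symm_measurableEquiv_toLp (Fin n)).symm
    (fun c d x y => rfl) (plprop_pi n)

lemma bm_mult {n : ℕ} {t : ℝ} (ht0 : 0 < t) (ht1 : t < 1)
    {A B C : Set (EuclideanSpace ℝ (Fin n))}
    (hA : MeasurableSet A) (hB : MeasurableSet B) (hC : MeasurableSet C)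
    (hsub : (1-t) • A + t • B ⊆ C) :
    volume A ^ (1-t) * volume B ^ t ≤ volume C := by
  have ht1' : 0 < 1 - t := by linarith
  have hle : ∀ x y,
      A.indicator (1 : EuclideanSpace ℝ (Fin n) → ℝ≥0∞) x ^ (1-t)
        * B.indicator (1 : EuclideanSpace ℝ (Fin n) → ℝ≥0∞) y ^ t
      ≤ C.indicator (1 : EuclideanSpace ℝ (Fin n) → ℝ≥0∞) ((1-t) • x + t • y) := by
    intro x y
    by_cases hx : x ∈ A
    · by_cases hy : y ∈ B
      · have hmem : (1-t) • x + t • y ∈ C :=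
          hsub (Set.add_mem_add (smul_mem_smul_set hx) (smul_mem_smul_set hy))
        simp [Set.indicator_of_mem, hx, hy, hmem]
      · rw [Set.indicator_of_notMem hy, ENNReal.zero_rpow_of_pos ht0, mul_zero]
        exact zero_le
    · rw [Set.indicator_of_notMem hx, ENNReal.zero_rpow_of_pos ht1', zero_mul]
      exact zero_le
  have := plprop_euclidean n t ht0 ht1 (A.indicator 1) (B.indicator 1) (C.indicator 1)
    (measurable_one.indicator hA) (measurable_one.indicator hB)
    (measurable_one.indicator hC) hle
  rwa [lintegral_indicator_one hA, lintegral_indicator_one hB,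
    lintegral_indicator_one hC] at this

lemma bm_add {n : ℕ} (hn : 1 ≤ n) {A B : Set (EuclideanSpace ℝ (Fin n))}
    (hA : IsCompact A) (hB : IsCompact B) (hAne : A.Nonempty) (hBne : B.Nonempty) :
    ((volume A).toReal ^ (1/(n:ℝ)) + (volume B).toReal ^ (1/(n:ℝ))) ^ (n:ℕ)
      ≤ (volume (A + B)).toReal := by
  have hnR : (0:ℝ) < n := by exact_mod_cast hn
  have hfin : Module.finrank ℝ (EuclideanSpace ℝ (Fin n)) = n := finrank_euclideanSpace_fin
  have hABfin : volume (A + B) ≠ ∞ := (hA.add hB).measure_lt_top.ne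
  have hAfin : volume A ≠ ∞ := hA.measure_lt_top.ne
  have hBfin : volume B ≠ ∞ := hB.measure_lt_top.ne
  set va := (volume A).toReal with hva_def
  set vb := (volume B).toReal with hvb_def
  have hva0 : 0 ≤ va := ENNReal.toReal_nonneg
  have hvb0 : 0 ≤ vb := ENNReal.toReal_nonneg
  set a := va ^ (1/(n:ℝ)) with ha_def
  set b := vb ^ (1/(n:ℝ)) with hb_def
  have ha0 : 0 ≤ a := Real.rpow_nonneg hva0 _
  have hb0 : 0 ≤ b := Real.rpow_nonneg hvb0 _
  have han : a ^ (n:ℕ) = va := by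
    rw [ha_def, ← Real.rpow_natCast (va ^ (1/(n:ℝ))) n, ← Real.rpow_mul hva0,
      one_div_mul_cancel hnR.ne', Real.rpow_one]
  have hbn : b ^ (n:ℕ) = vb := by
    rw [hb_def, ← Real.rpow_natCast (vb ^ (1/(n:ℝ))) n, ← Real.rpow_mul hvb0,
      one_div_mul_cancel hnR.ne', Real.rpow_one]
  have htrB : vb ≤ (volume (A + B)).toReal := by
    obtain ⟨x₀, hx₀⟩ := hAne
    refine ENNReal.toReal_mono hABfin ?_
    calc volume B = volume (x₀ +ᵥ B) := (measure_vadd _ _ _).symm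
      _ ≤ volume (A + B) := measure_mono fun z hz => by
          obtain ⟨y, hy, rfl⟩ := hz
          exact Set.add_mem_add hx₀ hy
  have htrA : va ≤ (volume (A + B)).toReal := by
    obtain ⟨y₀, hy₀⟩ := hBne
    refine ENNReal.toReal_mono hABfin ?_
    calc volume A = volume (y₀ +ᵥ A) := (measure_vadd _ _ _).symm
      _ ≤ volume (A + B) := measure_mono fun z hz => by
          obtain ⟨x, hx, rfl⟩ := hz
          simpa [add_comm] using Set.add_mem_add hx hy₀
  rcases eq_or_lt_of_le hva0 with hva_eq | hva_pos
  · have haz : a = 0 := by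
      rw [ha_def, ← hva_eq, Real.zero_rpow (by positivity : 1/(n:ℝ) ≠ 0)]
    rw [haz, zero_add, hbn]
    exact htrB
  rcases eq_or_lt_of_le hvb0 with hvb_eq | hvb_pos
  · have hbz : b = 0 := by
      rw [hb_def, ← hvb_eq, Real.zero_rpow (by positivity : 1/(n:ℝ) ≠ 0)]
    rw [hbz, add_zero, han]
    exact htrA
  have ha : 0 < a := Real.rpow_pos_of_pos hva_pos _
  have hb : 0 < b := Real.rpow_pos_of_pos hvb_pos _
  set s := a + b with hs_def
  have hs : 0 < s := by positivity
  set t := b / s with ht_def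
  have ht0 : 0 < t := by positivity
  have ht1 : t < 1 := by rw [ht_def, div_lt_one hs]; linarith
  have h1t0 : (0:ℝ) < 1 - t := by linarith
  have h1t : 1 - t = a / s := by
    rw [ht_def]; field_simp; rw [hs_def]; ring
  set A' := (1-t)⁻¹ • A with hA'_def
  set B' := t⁻¹ • B with hB'_def
  have hA'meas : MeasurableSet A' := by
    rw [hA'_def, ← Set.image_smul]
    exact (hA.image (continuous_const_smul _)).measurableSet
  have hB'meas : MeasurableSet B' := by
    rw [hB'_def, ← Set.image_smul]
    exact (hB.image (continuous_const_smul _)).measurableSet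
  have e1 : (1-t) • A' = A := by
    rw [hA'_def]
    ext z
    constructor
    · rintro ⟨w, ⟨x, hx, rfl⟩, rfl⟩
      simpa [smul_inv_smul₀ h1t0.ne'] using hx
    · intro hz
      exact ⟨(1-t)⁻¹ • z, ⟨z, hz, rfl⟩, smul_inv_smul₀ h1t0.ne' z⟩
  have e2 : t • B' = B := by
    rw [hB'_def]
    ext z
    constructor
    · rintro ⟨w, ⟨y, hy, rfl⟩, rfl⟩
      simpa [smul_inv_smul₀ ht0.ne'] using hy
    · intro hz
      exact ⟨t⁻¹ • z, ⟨z, hz, rfl⟩, smul_inv_smul₀ ht0.ne' z⟩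
  have hsub : (1-t) • A' + t • B' ⊆ A + B := by rw [e1, e2]
  have hvolA' : volume A' = ENNReal.ofReal (s ^ (n:ℕ)) := by
    rw [hA'_def, Measure.addHaar_smul, hfin,
      show volume A = ENNReal.ofReal va from (ENNReal.ofReal_toReal hAfin).symm,
      ← ENNReal.ofReal_mul (abs_nonneg _)]
    congr 1
    rw [abs_of_pos (pow_pos (inv_pos.mpr h1t0) n), h1t, inv_div, ← han, ← mul_pow,
      div_mul_cancel₀ _ ha.ne']
  have hvolB' : volume B' = ENNReal.ofReal (s ^ (n:ℕ)) := by
    rw [hB'_def, Measure.addHaar_smul, hfin,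
      show volume B = ENNReal.ofReal vb from (ENNReal.ofReal_toReal hBfin).symm,
      ← ENNReal.ofReal_mul (abs_nonneg _)]
    congr 1
    rw [abs_of_pos (pow_pos (inv_pos.mpr ht0) n), ht_def, inv_div, ← hbn, ← mul_pow,
      div_mul_cancel₀ _ hb.ne']
  have hbm := bm_mult ht0 ht1 hA'meas hB'meas (hA.add hB).measurableSet hsub
  rw [hvolA', hvolB'] at hbm
  have hsn0 : ENNReal.ofReal (s ^ (n:ℕ)) ≠ 0 := by
    simp only [ne_eq, ENNReal.ofReal_eq_zero, not_le]
    positivity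
  have heq : (ENNReal.ofReal (s^(n:ℕ)))^(1-t) * (ENNReal.ofReal (s^(n:ℕ)))^t
      = ENNReal.ofReal (s^(n:ℕ)) := by
    rw [← ENNReal.rpow_add _ _ hsn0 ENNReal.ofReal_ne_top, sub_add_cancel, ENNReal.rpow_one]
  rw [heq] at hbm
  calc ((volume A).toReal ^ (1/(n:ℝ)) + (volume B).toReal ^ (1/(n:ℝ))) ^ (n:ℕ)
      = (ENNReal.ofReal (s^(n:ℕ))).toReal := by rw [ENNReal.toReal_ofReal (by positivity)]
    _ ≤ (volume (A+B)).toReal := ENNReal.toReal_mono hABfin hbm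

theorem minkowski_mixed_volume_inequality (n : ℕ) (hn : 1 ≤ n)
    (K L : Set (EuclideanSpace ℝ (Fin n)))
    (hK : IsCompact K) (hKc : Convex ℝ K) (hKne : K.Nonempty)
    (hL : IsCompact L) (hLc : Convex ℝ L) (hLne : L.Nonempty)
    (c : ℝ)
    (hc : Filter.Tendsto
      (fun ε : ℝ => ((volume (K + ε • L)).toReal - (volume K).toReal) / ε)
      (nhdsWithin 0 (Set.Ioi 0)) (nhds c)) :
    c ^ n ≥ (n : ℝ) ^ n * (volume K).toReal ^ (n - 1) * (volume L).toReal := by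
  have hnR : (0:ℝ) < n := by exact_mod_cast hn
  set A := (volume K).toReal with hA_def
  set B := (volume L).toReal with hB_def
  have hA0 : 0 ≤ A := ENNReal.toReal_nonneg
  have hB0 : 0 ≤ B := ENNReal.toReal_nonneg
  set a := A ^ (1/(n:ℝ)) with ha_def
  set b := B ^ (1/(n:ℝ)) with hb_def
  have ha0 : 0 ≤ a := Real.rpow_nonneg hA0 _
  have hb0 : 0 ≤ b := Real.rpow_nonneg hB0 _
  have han : a ^ (n:ℕ) = A := by
    rw [ha_def, ← Real.rpow_natCast (A ^ (1/(n:ℝ))) n, ← Real.rpow_mul hA0,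
      one_div_mul_cancel hnR.ne', Real.rpow_one]
  have hbn : b ^ (n:ℕ) = B := by
    rw [hb_def, ← Real.rpow_natCast (B ^ (1/(n:ℝ))) n, ← Real.rpow_mul hB0,
      one_div_mul_cancel hnR.ne', Real.rpow_one]
  have hq : ∀ ε : ℝ, 0 < ε →
      ((a + ε*b)^(n:ℕ) - A)/ε ≤ ((volume (K + ε • L)).toReal - A)/ε := by
    intro ε hε
    have hεL : IsCompact (ε • L) := by
      rw [← Set.image_smul]; exact hL.image (continuous_const_smul ε)
    have hbm := bm_add hn hK hεL hKne (smul_set_nonempty.mpr hLne)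
    have hvol : (volume (ε • L)).toReal = ε^(n:ℕ) * B := by
      rw [Measure.addHaar_smul, finrank_euclideanSpace_fin, ENNReal.toReal_mul,
        ENNReal.toReal_ofReal (abs_nonneg _), abs_of_pos (pow_pos hε n), hB_def]
    have hroot : (volume (ε • L)).toReal ^ (1/(n:ℝ)) = ε * b := by
      rw [hvol, Real.mul_rpow (by positivity) hB0, hb_def]
      congr 1
      rw [← Real.rpow_natCast ε n, ← Real.rpow_mul hε.le, mul_one_div,
        div_self hnR.ne', Real.rpow_one]
    rw [hroot] at hbm
    have hbm' : (a + ε*b)^(n:ℕ) ≤ (volume (K + ε • L)).toReal := hbm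
    gcongr
  have hc_ge : ∀ r : ℝ, (∀ ε : ℝ, 0 < ε → r ≤ ((a + ε*b)^(n:ℕ) - A)/ε) → r ≤ c := by
    intro r hr
    refine ge_of_tendsto hc ?_
    filter_upwards [self_mem_nhdsWithin] with ε hε
    exact le_trans (hr ε hε) (hq ε hε)
  rcases eq_or_lt_of_le ha0 with haz | hapos
  · have hAz : A = 0 := by rw [← han, ← haz, zero_pow (by omega : n ≠ 0)]
    rcases Nat.lt_or_ge 1 n with hn2 | hn1
    · have hc0 : 0 ≤ c := hc_ge 0 (fun ε hε => by
        rw [← haz, zero_add, hAz, sub_zero]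
        positivity)
      have hrhs : (n:ℝ)^n * A^(n-1) * B = 0 := by
        rw [hAz, zero_pow (by omega : n - 1 ≠ 0), mul_zero, zero_mul]
      rw [ge_iff_le, hrhs]
      exact pow_nonneg hc0 n
    · have hn1' : n = 1 := le_antisymm hn1 hn
      subst hn1'
      have hb1 : b = B := by
        rw [hb_def]; norm_num
      have hcB : B ≤ c := hc_ge B (fun ε hε => by
        rw [← haz, zero_add, hAz, pow_one, sub_zero, hb1, mul_comm, mul_div_assoc,
          div_self hε.ne', mul_one])
      simpa using hcB
  · have key : ∀ ε : ℝ, 0 < ε → (n:ℝ) * a^(n-1) * b ≤ ((a + ε*b)^(n:ℕ) - A)/ε := by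
      intro ε hε
      rw [le_div_iff₀ hε]
      have hx2 : (-2:ℝ) ≤ ε*b/a := by
        have : (0:ℝ) ≤ ε*b/a := by positivity
        linarith
      have h1 : (1:ℝ) + (n:ℕ) * (ε*b/a) ≤ (1 + ε*b/a)^(n:ℕ) := one_add_mul_le_pow hx2 n
      have hber : A * (1 + (n:ℝ) * (ε*b/a)) ≤ (a + ε*b)^(n:ℕ) := by
        calc A * (1 + (n:ℝ)*(ε*b/a)) ≤ A * (1 + ε*b/a)^(n:ℕ) := by
              apply mul_le_mul_of_nonneg_left _ hA0
              exact_mod_cast h1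
          _ = (a * (1 + ε*b/a))^(n:ℕ) := by rw [mul_pow, han]
          _ = (a + ε*b)^(n:ℕ) := by
              congr 1
              field_simp
      have hAa : A / a = a^(n-1) := by
        rw [← han, eq_comm, eq_div_iff hapos.ne', ← pow_succ]
        congr 1
        omega
      have heq : A * (1 + (n:ℝ)*(ε*b/a)) = A + (n:ℝ)*a^(n-1)*b*ε := by
        rw [mul_add, mul_one, ← hAa]
        field_simp
      linarith [hber, heq]
    have hge := hc_ge _ (key)
    have hr0 : 0 ≤ (n:ℝ)*a^(n-1)*b := by positivity
    have hcalc : (n:ℝ)^n * A^(n-1) * B = ((n:ℝ) * a^(n-1) * b)^n := by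
      rw [← han, ← hbn, mul_pow, mul_pow, ← pow_mul, ← pow_mul, Nat.mul_comm (n-1) n]
    rw [ge_iff_le, hcalc]
    exact pow_le_pow_left₀ hr0 hge n
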